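/- Let s_k/t_k be the convergents of an irrational number x with continued fraction expansion [a_0,a_1,a_2,...], where all a_k for k ≥ 1 are positive integers. Suppose t_k and t_{k+1} are both odd. Then (s_k/t_k) = (s_{k+1}/t_{k+1}) unless either (t_k ≡ 1 mod 4, t_{k+1} ≡ 3 mod 4, and k is odd) or (t_k ≡ 3 mod 4, t_{k+1} ≡ 1 mod 4, and k is even), in which two cases (s_k/t_k) = -(s_{k+1}/t_{k+1}). -/
import Mathlib


/-- Numerators of continued fraction convergents: `cfS a k = s_k`
(with `s_{-1} = 1`, `s_0 = a_0`, `s_k = a_k s_{k-1} + s_{k-2}`). -/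
def cfS (a : ℕ → ℤ) : ℕ → ℤ
  | 0 => a 0
  | 1 => a 1 * a 0 + 1
  | (k+2) => a (k+2) * cfS a (k+1) + cfS a k

/-- Denominators of continued fraction convergents: `cfT a k = t_k`
(with `t_{-1} = 0`, `t_0 = 1`, `t_k = a_k t_{k-1} + t_{k-2}`). -/
def cfT (a : ℕ → ℤ) : ℕ → ℤ
  | 0 => 1
  | 1 => a 1
  | (k+2) => a (k+2) * cfT a (k+1) + cfT a k

lemma cfT_pos (a : ℕ → ℤ) (ha : ∀ i, 1 ≤ i → 0 < a i) : ∀ k, 0 < cfT a k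
  | 0 => by simp [cfT]
  | 1 => ha 1 le_rfl
  | (k+2) => by
    have h1 := cfT_pos a ha (k+1)
    have h0 := cfT_pos a ha k
    have h2 := ha (k+2) (by omega)
    show 0 < a (k+2) * cfT a (k+1) + cfT a k
    nlinarith

lemma cf_det (a : ℕ → ℤ) : ∀ k, cfS a (k+1) * cfT a k - cfS a k * cfT a (k+1) = (-1)^k
  | 0 => by simp [cfS, cfT]; ring
  | (k+1) => by
    have ih := cf_det a k
    show (a (k+2) * cfS a (k+1) + cfS a k) * cfT a (k+1)
        - cfS a (k+1) * (a (k+2) * cfT a (k+1) + cfT a k) = (-1)^(k+1)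
    rw [pow_succ]
    linear_combination -ih

theorem jacobi_sign_change_criterion
    (a : ℕ → ℤ) (ha : ∀ i, 1 ≤ i → 0 < a i) (k : ℕ)
    (hk : Odd (cfT a k)) (hk1 : Odd (cfT a (k+1))) :
    (((cfT a k ≡ 1 [ZMOD 4] ∧ cfT a (k+1) ≡ 3 [ZMOD 4] ∧ Odd k) ∨
      (cfT a k ≡ 3 [ZMOD 4] ∧ cfT a (k+1) ≡ 1 [ZMOD 4] ∧ Even k)) →
      jacobiSym (cfS a k) (cfT a k).natAbs
        = -jacobiSym (cfS a (k+1)) (cfT a (k+1)).natAbs) ∧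
    (¬((cfT a k ≡ 1 [ZMOD 4] ∧ cfT a (k+1) ≡ 3 [ZMOD 4] ∧ Odd k) ∨
       (cfT a k ≡ 3 [ZMOD 4] ∧ cfT a (k+1) ≡ 1 [ZMOD 4] ∧ Even k)) →
      jacobiSym (cfS a k) (cfT a k).natAbs
        = jacobiSym (cfS a (k+1)) (cfT a (k+1)).natAbs) := by
  set m : ℕ := (cfT a k).natAbs with hmdef
  set n : ℕ := (cfT a (k+1)).natAbs with hndef
  have hmpos := cfT_pos a ha k
  have hnpos := cfT_pos a ha (k+1)
  have hm : (m : ℤ) = cfT a k := Int.natAbs_of_nonneg hmpos.le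
  have hn : (n : ℤ) = cfT a (k+1) := Int.natAbs_of_nonneg hnpos.le
  have hdet := cf_det a k
  have hsq : ((-1:ℤ)^k) * ((-1:ℤ)^k) = 1 := by
    rw [← pow_add]; exact Even.neg_one_pow ⟨k, rfl⟩
  have hmodd : Odd m := Int.natAbs_odd.mpr hk
  have hnodd : Odd n := Int.natAbs_odd.mpr hk1
  have hm4 : m % 4 = 1 ∨ m % 4 = 3 := by
    have := Nat.odd_iff.mp hmodd; omega
  have hn4 : n % 4 = 1 ∨ n % 4 = 3 := by
    have := Nat.odd_iff.mp hnodd; omega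
  -- coprimality facts
  have hcop1 : Int.gcd (cfS a k) (m : ℤ) = 1 := by
    rw [hm, ← Int.isCoprime_iff_gcd_eq_one]
    exact ⟨-((-1)^k * cfT a (k+1)), (-1)^k * cfS a (k+1), by linear_combination ((-1:ℤ)^k) * hdet + hsq⟩
  have hcop2 : Int.gcd (cfS a (k+1)) (n : ℤ) = 1 := by
    rw [hn, ← Int.isCoprime_iff_gcd_eq_one]
    exact ⟨(-1)^k * cfT a k, -((-1)^k * cfS a k), by linear_combination ((-1:ℤ)^k) * hdet + hsq⟩
  have hcopnm : Int.gcd (n : ℤ) (m : ℤ) = 1 := by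
    rw [hm, hn, ← Int.isCoprime_iff_gcd_eq_one]
    exact ⟨-((-1)^k * cfS a k), (-1)^k * cfS a (k+1), by linear_combination ((-1:ℤ)^k) * hdet + hsq⟩
  have hcopmn : Int.gcd (m : ℤ) (n : ℤ) = 1 := by
    rw [hm, hn, ← Int.isCoprime_iff_gcd_eq_one]
    exact ⟨(-1)^k * cfS a (k+1), -((-1)^k * cfS a k), by linear_combination ((-1:ℤ)^k) * hdet + hsq⟩
  -- modular relations
  have hA : jacobiSym (cfS a k * (n:ℤ)) m = jacobiSym ((-1)^(k+1)) m := by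
    refine jacobiSym.mod_left' (Int.modEq_iff_dvd.mpr ⟨-(cfS a (k+1)), ?_⟩)
    rw [hm, hn, pow_succ]
    linear_combination hdet
  have hB : jacobiSym (cfS a (k+1) * (m:ℤ)) n = jacobiSym ((-1)^k) n := by
    refine jacobiSym.mod_left' (Int.modEq_iff_dvd.mpr ⟨-(cfS a k), ?_⟩)
    rw [hm, hn]
    linear_combination -hdet
  have hA' : jacobiSym (cfS a k) m * jacobiSym (n:ℤ) m = jacobiSym ((-1)^(k+1)) m := by
    rw [← jacobiSym.mul_left, hA]
  have hB' : jacobiSym (cfS a (k+1)) n * jacobiSym (m:ℤ) n = jacobiSym ((-1)^k) n := by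
    rw [← jacobiSym.mul_left, hB]
  -- values of the auxiliary symbols
  have he1 : jacobiSym ((-1:ℤ)^(k+1)) m = if k % 2 = 0 ∧ m % 4 = 3 then -1 else 1 := by
    rcases Nat.even_or_odd k with hke | hko
    · have : ((-1:ℤ))^(k+1) = -1 := Odd.neg_one_pow (Even.add_one hke)
      rw [this, jacobiSym.at_neg_one hmodd]
      rcases hm4 with h | h
      · rw [ZMod.χ₄_nat_one_mod_four h, if_neg (by omega)]
      · rw [ZMod.χ₄_nat_three_mod_four h, if_pos ⟨Nat.even_iff.mp hke, h⟩]
    · have : ((-1:ℤ))^(k+1) = 1 := Even.neg_one_pow (Odd.add_one hko)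
      rw [this, jacobiSym.one_left, if_neg (by have := Nat.odd_iff.mp hko; omega)]
  have he2 : jacobiSym ((-1:ℤ)^k) n = if k % 2 = 1 ∧ n % 4 = 3 then -1 else 1 := by
    rcases Nat.even_or_odd k with hke | hko
    · have : ((-1:ℤ))^k = 1 := Even.neg_one_pow hke
      rw [this, jacobiSym.one_left, if_neg (by have := Nat.even_iff.mp hke; omega)]
    · have : ((-1:ℤ))^k = -1 := Odd.neg_one_pow hko
      rw [this, jacobiSym.at_neg_one hnodd]
      rcases hn4 with h | h
      · rw [ZMod.χ₄_nat_one_mod_four h, if_neg (by omega)]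
      · rw [ZMod.χ₄_nat_three_mod_four h, if_pos ⟨Nat.odd_iff.mp hko, h⟩]
  have hr : jacobiSym (n:ℤ) m * jacobiSym (m:ℤ) n = if m % 4 = 3 ∧ n % 4 = 3 then -1 else 1 := by
    rcases hm4 with h | h
    · have := jacobiSym.quadratic_reciprocity_one_mod_four h hnodd
      rw [this, if_neg (by omega), ← pow_two]
      exact jacobiSym.sq_one hcopnm
    · rcases hn4 with h' | h'
      · have := jacobiSym.quadratic_reciprocity_one_mod_four h' hmodd
        rw [← this, if_neg (by omega), ← pow_two]
        exact jacobiSym.sq_one hcopnm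
      · have := jacobiSym.quadratic_reciprocity_three_mod_four h h'
        rw [this, if_pos ⟨h, h'⟩, mul_neg, ← pow_two, jacobiSym.sq_one hcopnm]
  -- combine
  have hrsq : (if m % 4 = 3 ∧ n % 4 = 3 then (-1:ℤ) else 1) *
      (if m % 4 = 3 ∧ n % 4 = 3 then (-1:ℤ) else 1) = 1 := by
    split_ifs <;> norm_num
  have hX : jacobiSym (cfS a k) m * jacobiSym (cfS a (k+1)) n
      = (if k % 2 = 0 ∧ m % 4 = 3 then (-1:ℤ) else 1)
        * (if k % 2 = 1 ∧ n % 4 = 3 then (-1:ℤ) else 1)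
        * (if m % 4 = 3 ∧ n % 4 = 3 then (-1:ℤ) else 1) := by
    have h1 : (jacobiSym (cfS a k) m * jacobiSym (n:ℤ) m)
        * (jacobiSym (cfS a (k+1)) n * jacobiSym (m:ℤ) n)
        = (if k % 2 = 0 ∧ m % 4 = 3 then (-1:ℤ) else 1)
          * (if k % 2 = 1 ∧ n % 4 = 3 then (-1:ℤ) else 1) := by
      rw [hA', hB', he1, he2]
    calc jacobiSym (cfS a k) m * jacobiSym (cfS a (k+1)) n
        = jacobiSym (cfS a k) m * jacobiSym (cfS a (k+1)) n
          * ((jacobiSym (n:ℤ) m * jacobiSym (m:ℤ) n)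
            * (if m % 4 = 3 ∧ n % 4 = 3 then (-1:ℤ) else 1)) := by
          rw [hr, hrsq, mul_one]
      _ = (jacobiSym (cfS a k) m * jacobiSym (n:ℤ) m)
          * (jacobiSym (cfS a (k+1)) n * jacobiSym (m:ℤ) n)
          * (if m % 4 = 3 ∧ n % 4 = 3 then (-1:ℤ) else 1) := by ring
      _ = _ := by rw [h1]
  have hsq2 : jacobiSym (cfS a (k+1)) n * jacobiSym (cfS a (k+1)) n = 1 := by
    have := jacobiSym.sq_one hcop2; nlinarith [this]
  have main : jacobiSym (cfS a k) m
      = (if (m % 4 = 1 ∧ n % 4 = 3 ∧ k % 2 = 1) ∨ (m % 4 = 3 ∧ n % 4 = 1 ∧ k % 2 = 0)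
          then (-1:ℤ) else 1) * jacobiSym (cfS a (k+1)) n := by
    have hval : (if k % 2 = 0 ∧ m % 4 = 3 then (-1:ℤ) else 1)
        * (if k % 2 = 1 ∧ n % 4 = 3 then (-1:ℤ) else 1)
        * (if m % 4 = 3 ∧ n % 4 = 3 then (-1:ℤ) else 1)
        = (if (m % 4 = 1 ∧ n % 4 = 3 ∧ k % 2 = 1) ∨ (m % 4 = 3 ∧ n % 4 = 1 ∧ k % 2 = 0)
            then (-1:ℤ) else 1) := by
      have hk2 : k % 2 = 0 ∨ k % 2 = 1 := by omega
      rcases hm4 with hm' | hm' <;> rcases hn4 with hn' | hn' <;> rcases hk2 with hk2 | hk2 <;>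
        simp [hm', hn', hk2]
    calc jacobiSym (cfS a k) m
        = jacobiSym (cfS a k) m * jacobiSym (cfS a (k+1)) n * jacobiSym (cfS a (k+1)) n := by
          rw [mul_assoc, hsq2, mul_one]
      _ = _ := by rw [hX, hval]
  -- translate the congruence conditions
  have hmc1 : (cfT a k ≡ 1 [ZMOD 4]) ↔ m % 4 = 1 := by
    rw [← hm, Int.ModEq]; omega
  have hmc3 : (cfT a k ≡ 3 [ZMOD 4]) ↔ m % 4 = 3 := by
    rw [← hm, Int.ModEq]; omega
  have hnc1 : (cfT a (k+1) ≡ 1 [ZMOD 4]) ↔ n % 4 = 1 := by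
    rw [← hn, Int.ModEq]; omega
  have hnc3 : (cfT a (k+1) ≡ 3 [ZMOD 4]) ↔ n % 4 = 3 := by
    rw [← hn, Int.ModEq]; omega
  have hiff : ((cfT a k ≡ 1 [ZMOD 4] ∧ cfT a (k+1) ≡ 3 [ZMOD 4] ∧ Odd k) ∨
       (cfT a k ≡ 3 [ZMOD 4] ∧ cfT a (k+1) ≡ 1 [ZMOD 4] ∧ Even k)) ↔
      ((m % 4 = 1 ∧ n % 4 = 3 ∧ k % 2 = 1) ∨ (m % 4 = 3 ∧ n % 4 = 1 ∧ k % 2 = 0)) := by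
    rw [hmc1, hmc3, hnc1, hnc3, Nat.odd_iff, Nat.even_iff]
  constructor
  · intro h
    rw [main, if_pos (hiff.mp h), neg_one_mul]
  · intro h
    rw [main, if_neg (fun hc => h (hiff.mpr hc)), one_mul]
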